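/- There exists a constant c > 0 such that the following holds. Let X₁, X₂, …, X_m be i.i.d. N(0, (1/n)I_n) random vectors, with m = m_n and μ = μ_n depending on n. If μ²/n → 0 and (log m)/n → 0 as n → ∞, then E[ exp( (μ⁴/(2n(1+μ²/n)))·max_{1≤j≤m} ‖X_j‖₂² ) ] ≤ exp( cμ⁴/(n(1+μ²/n)) )·(1+o(1)); equivalently, limsup_n E[exp((μ⁴/(2n(1+μ²/n)))·max_j ‖X_j‖₂²)] / exp(cμ⁴/(n(1+μ²/n))) ≤ 1. -/

import Mathlib

open MeasureTheory ProbabilityTheory Filter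
open scoped NNReal ENNReal

noncomputable section

/-- The joint law of `(X₁, …, X_m)`, i.i.d. `N(0, (1/n) I_n)` vectors. -/
def Xlaw (n m : ℕ) : Measure (Fin m → Fin n → ℝ) :=
  Measure.pi fun _ : Fin m => Measure.pi fun _ : Fin n => gaussianReal 0 (n : ℝ≥0)⁻¹

/-- `max_{1 ≤ j ≤ m} ‖X_j‖₂²`. -/
def maxNormSq (n m : ℕ) (hm : 0 < m) (ω : Fin m → Fin n → ℝ) : ℝ :=
  Finset.univ.sup' ⟨⟨0, hm⟩, Finset.mem_univ _⟩ fun j => ∑ i, ω j i ^ 2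

open Real
instance (n m : ℕ) : IsProbabilityMeasure (Xlaw n m) := by
  unfold Xlaw; infer_instance

lemma measurable_maxNormSq (n m : ℕ) (hm : 0 < m) : Measurable (maxNormSq n m hm) := by
  unfold maxNormSq
  have h : ∀ (s : Finset (Fin m)) (hs : s.Nonempty),
      Measurable fun ω : Fin m → Fin n → ℝ => s.sup' hs fun j => ∑ i, ω j i ^ 2 := by
    intro s hs
    induction hs using Finset.Nonempty.cons_induction with
    | singleton a =>
        simp only [Finset.sup'_singleton]
        fun_prop
    | cons a s h hs ih =>
        rw [show (Finset.cons a s h).sup' (Finset.cons_nonempty h) = fun f => f a ⊔ s.sup' hs f from funext fun f => Finset.sup'_cons hs f]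
        exact Measurable.max (by fun_prop) ih
  exact h _ _
lemma lintegral_pi_prod {m : ℕ} {α : Type*} [MeasurableSpace α] (ν : Measure α)
    [SigmaFinite ν] (f : Fin m → α → ℝ≥0∞) (hf : ∀ j, Measurable (f j)) :
    ∫⁻ x : Fin m → α, ∏ j, f j (x j) ∂Measure.pi (fun _ => ν) = ∏ j, ∫⁻ y, f j y ∂ν := by
  induction m with
  | zero => simp [Measure.pi_of_empty]
  | succ n ih =>
      have hmp := (measurePreserving_piFinSuccAbove (fun _ : Fin (n+1) => ν) 0)
      have key := hmp.lintegral_comp (f := fun p : α × (Fin n → α) =>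
        f 0 p.1 * ∏ j : Fin n, f (Fin.succAbove 0 j) (p.2 j))
        (((hf 0).comp measurable_fst).mul
          (Finset.measurable_prod _ fun j _ =>
            (hf _).comp ((measurable_pi_apply j).comp measurable_snd)))
      calc ∫⁻ x : Fin (n+1) → α, ∏ j, f j (x j) ∂Measure.pi (fun _ => ν)
          = ∫⁻ x : Fin (n+1) → α,
              f 0 (((MeasurableEquiv.piFinSuccAbove (fun _ => α) 0) x).1) *
              ∏ j : Fin n, f (Fin.succAbove 0 j)
                (((MeasurableEquiv.piFinSuccAbove (fun _ => α) 0) x).2 j)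
              ∂Measure.pi (fun _ => ν) := by
            refine lintegral_congr fun x => ?_
            rw [Fin.prod_univ_succAbove (fun j => f j (x j)) 0]; rfl
        _ = ∫⁻ p : α × (Fin n → α), f 0 p.1 * ∏ j : Fin n, f (Fin.succAbove 0 j) (p.2 j)
              ∂(ν.prod (Measure.pi fun _ => ν)) := key
        _ = (∫⁻ y, f 0 y ∂ν) * ∏ j : Fin n, ∫⁻ y, f (Fin.succAbove 0 j) y ∂ν := by
            rw [lintegral_prod_mul (f := f 0)
              (g := fun y : Fin n → α => ∏ j : Fin n, f (Fin.succAbove 0 j) (y j))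
              ((hf 0).aemeasurable)
              (Measurable.aemeasurable
                (Finset.measurable_prod _ fun j _ => (hf _).comp (measurable_pi_apply j)))]
            rw [ih (fun j => f (Fin.succAbove 0 j)) (fun j => hf _)]
        _ = ∏ j, ∫⁻ y, f j y ∂ν := by
            rw [Fin.prod_univ_succAbove (fun j => ∫⁻ y, f j y ∂ν) 0]
lemma gauss_mgf_sq {v : ℝ≥0} (hv : v ≠ 0) {s : ℝ} (hs : 2 * s * v < 1) :
    ∫⁻ x, ENNReal.ofReal (Real.exp (s * x ^ 2)) ∂gaussianReal 0 v
      = ENNReal.ofReal ((1 - 2 * s * v) ^ (-(1:ℝ)/2)) := by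
  have hvpos : (0:ℝ) < v := by positivity
  set b : ℝ := 1 / (2 * v) - s with hb
  have hbpos : 0 < b := by
    rw [hb, sub_pos, lt_div_iff₀ (by positivity)]
    linarith [hs]
  have hpdf : ∀ x : ℝ, gaussianPDFReal 0 v x * Real.exp (s * x ^ 2)
      = (Real.sqrt (2 * π * v))⁻¹ * Real.exp (-b * x ^ 2) := by
    intro x
    rw [gaussianPDFReal]
    rw [mul_assoc, ← Real.exp_add]
    congr 1
    have hv' : (v:ℝ) ≠ 0 := hvpos.ne'
    rw [hb]
    field_simp
    ring
  rw [gaussianReal_of_var_ne_zero 0 hv,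
    lintegral_withDensity_eq_lintegral_mul _ (measurable_gaussianPDF 0 v)
      (by measurability)]
  have : ∀ x : ℝ, (gaussianPDF 0 v x * ENNReal.ofReal (Real.exp (s * x ^ 2)))
      = ENNReal.ofReal (gaussianPDFReal 0 v x * Real.exp (s * x ^ 2)) := by
    intro x
    rw [gaussianPDF, ← ENNReal.ofReal_mul (gaussianPDFReal_nonneg 0 v x)]
  simp only [Pi.mul_apply]
  rw [lintegral_congr this]
  have hint : Integrable (fun x : ℝ => gaussianPDFReal 0 v x * Real.exp (s * x ^ 2)) := by
    simp_rw [hpdf]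
    exact (integrable_exp_neg_mul_sq hbpos).const_mul _
  rw [← ofReal_integral_eq_lintegral_ofReal hint
    (Filter.Eventually.of_forall fun x =>
      mul_nonneg (gaussianPDFReal_nonneg 0 v x) (Real.exp_nonneg _))]
  congr 1
  simp_rw [hpdf]
  rw [integral_const_mul, integral_gaussian]
  -- (√(2πv))⁻¹ * √(π/b) = (1-2sv)^(-1/2)
  rw [← Real.sqrt_inv, ← Real.sqrt_mul (by positivity)]
  have h1 : (2 * π * v)⁻¹ * (π / b) = (1 - 2 * s * v)⁻¹ := by
    have : 1 - 2 * s * v = 2 * v * b := by rw [hb]; field_simp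
    rw [this]
    field_simp
  have hpos : (0:ℝ) < 1 - 2 * s * v := by linarith
  rw [h1, show (-1/2 : ℝ) = -(1/2) by norm_num, Real.rpow_neg hpos.le,
    ← Real.inv_rpow hpos.le, Real.sqrt_eq_rpow]
lemma lyapunov {α : Type*} [MeasurableSpace α] (P : Measure α) [IsProbabilityMeasure P]
    {f : α → ℝ≥0∞} (hf : AEMeasurable f P) {θ : ℝ} (hθ : 1 ≤ θ) :
    ∫⁻ a, f a ∂P ≤ (∫⁻ a, f a ^ θ ∂P) ^ (1/θ) := by
  rcases eq_or_lt_of_le hθ with h1 | h1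
  · simp [← h1]
  · have hpq : θ.HolderConjugate (θ / (θ - 1)) := Real.HolderConjugate.conjExponent h1
    have := ENNReal.lintegral_mul_le_Lp_mul_Lq P hpq hf aemeasurable_const (g := fun _ => 1)
    simpa using this

lemma neg_log_one_sub {s : ℝ} (h0 : 0 ≤ s) (h1 : s ≤ 1/2) :
    -Real.log (1 - s) ≤ s + 2 * s ^ 2 := by
  have hpos : (0:ℝ) < 1 - s := by linarith
  have h2 := Real.log_le_sub_one_of_pos (x := (1 - s)⁻¹) (by positivity)
  rw [Real.log_inv] at h2
  have h3 : (1 - s)⁻¹ - 1 = s / (1 - s) := by field_simp; ring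
  have h4 : s / (1 - s) ≤ s + 2 * s ^ 2 := by
    rw [div_le_iff₀ hpos]
    nlinarith
  linarith

lemma main_bound (n m : ℕ) (hm : 0 < m) (hn : 1 ≤ n) (t θ : ℝ)
    (ht : 0 ≤ t) (hθ : 1 ≤ θ) (hs : 2 * θ * t / n ≤ 1 / 2) :
    ∫⁻ ω, ENNReal.ofReal (Real.exp (t * maxNormSq n m hm ω)) ∂Xlaw n m
      ≤ ENNReal.ofReal (Real.exp ((Real.log m + θ*t + 4*θ^2*t^2/n) / θ)) := by
  have hnR : (0:ℝ) < n := by exact_mod_cast hn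
  have hθ0 : (0:ℝ) < θ := by linarith
  have hst : 0 ≤ 2 * θ * t / n := by positivity
  set s : ℝ := 2 * θ * t / n with hs_def
  -- measurability
  have hM : Measurable (maxNormSq n m hm) := measurable_maxNormSq n m hm
  have hmeas1 : Measurable fun ω => ENNReal.ofReal (Real.exp (t * maxNormSq n m hm ω)) :=
    ((Real.measurable_exp.comp (hM.const_mul t))).ennreal_ofReal
  -- Step 1: Lyapunov
  have step1 := lyapunov (Xlaw n m) hmeas1.aemeasurable hθ
  -- Step 2: pointwise
  have hptwise : ∀ ω, (ENNReal.ofReal (Real.exp (t * maxNormSq n m hm ω))) ^ θ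
      ≤ ∑ j : Fin m, ENNReal.ofReal (Real.exp (θ * t * ∑ i, ω j i ^ 2)) := by
    intro ω
    rw [ENNReal.ofReal_rpow_of_pos (Real.exp_pos _), ← Real.exp_mul]
    obtain ⟨j, _, hj⟩ := Finset.exists_mem_eq_sup' (s := (Finset.univ : Finset (Fin m)))
      ⟨⟨0, hm⟩, Finset.mem_univ _⟩ (fun j => ∑ i, ω j i ^ 2)
    have : maxNormSq n m hm ω = ∑ i, ω j i ^ 2 := hj
    rw [show t * maxNormSq n m hm ω * θ = θ * t * ∑ i, ω j i ^ 2 by rw [this]; ring]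
    exact Finset.single_le_sum (f := fun j => ENNReal.ofReal (Real.exp (θ * t * ∑ i, ω j i ^ 2)))
      (fun _ _ => zero_le) (Finset.mem_univ j)
  -- measurability of summands
  have hmeas2 : ∀ j : Fin m, Measurable fun ω : Fin m → Fin n → ℝ =>
      ENNReal.ofReal (Real.exp (θ * t * ∑ i, ω j i ^ 2)) := by
    intro j; fun_prop
  -- Step 3: sum of integrals
  have step3 : ∫⁻ ω, (ENNReal.ofReal (Real.exp (t * maxNormSq n m hm ω))) ^ θ ∂Xlaw n m
      ≤ ∑ j : Fin m, ∫⁻ ω, ENNReal.ofReal (Real.exp (θ * t * ∑ i, ω j i ^ 2)) ∂Xlaw n m := by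
    rw [← lintegral_finset_sum _ (fun j _ => hmeas2 j)]
    exact lintegral_mono hptwise
  -- Step 4: each integral is G ^ n
  set g : ℝ → ℝ≥0∞ := fun y => ENNReal.ofReal (Real.exp (θ * t * y ^ 2)) with hg_def
  have hg : Measurable g := by fun_prop
  set G : ℝ≥0∞ := ∫⁻ y, g y ∂gaussianReal 0 (n : ℝ≥0)⁻¹ with hG_def
  have inner : ∀ x : Fin n → ℝ,
      ENNReal.ofReal (Real.exp (θ * t * ∑ i, x i ^ 2)) = ∏ i : Fin n, g (x i) := by
    intro x
    rw [Finset.mul_sum, Real.exp_sum, ← ENNReal.ofReal_prod_of_nonneg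
      (fun _ _ => (Real.exp_nonneg _))]
  have inner_int : ∫⁻ x : Fin n → ℝ, ENNReal.ofReal (Real.exp (θ * t * ∑ i, x i ^ 2))
        ∂Measure.pi (fun _ : Fin n => gaussianReal 0 (n : ℝ≥0)⁻¹) = G ^ n := by
    simp_rw [inner]
    rw [lintegral_pi_prod _ _ (fun _ => hg)]
    simp
    rfl
  have step4 : ∀ j : Fin m, ∫⁻ ω, ENNReal.ofReal (Real.exp (θ * t * ∑ i, ω j i ^ 2)) ∂Xlaw n m
      = G ^ n := by
    intro j
    classical
    set F : Fin m → (Fin n → ℝ) → ℝ≥0∞ := fun j' x => if j' = j then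
        ENNReal.ofReal (Real.exp (θ * t * ∑ i, x i ^ 2)) else 1 with hF
    have hgm : Measurable fun x : Fin n → ℝ =>
        ENNReal.ofReal (Real.exp (θ * t * ∑ i, x i ^ 2)) := by fun_prop
    have hFmeas : ∀ j', Measurable (F j') := by
      intro j'
      by_cases h : j' = j
      · simpa [hF, h] using hgm
      · simp only [hF, h, if_false]
        exact measurable_const
    have hrep : ∀ ω : Fin m → Fin n → ℝ,
        ENNReal.ofReal (Real.exp (θ * t * ∑ i, ω j i ^ 2)) = ∏ j', F j' (ω j') := by
      intro ω
      simp only [hF]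
      rw [Finset.prod_ite_eq' Finset.univ j
        (fun j' => ENNReal.ofReal (Real.exp (θ * t * ∑ i, ω j' i ^ 2)))]
      simp
    rw [lintegral_congr hrep]
    rw [show Xlaw n m = Measure.pi
      (fun _ : Fin m => Measure.pi fun _ : Fin n => gaussianReal 0 (n : ℝ≥0)⁻¹) from rfl]
    rw [lintegral_pi_prod _ F hFmeas]
    have hval : ∀ j', (∫⁻ x, F j' x
        ∂Measure.pi (fun _ : Fin n => gaussianReal 0 (n : ℝ≥0)⁻¹)) = if j' = j then G ^ n else 1 := by
      intro j'
      by_cases h : j' = j <;> simp only [hF, h, if_true, if_false] <;>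
        simp [inner_int, h]
    rw [Finset.prod_congr rfl (fun j' _ => hval j')]
    simp
  -- Step 5: value of G
  have hv : ((n : ℝ≥0)⁻¹ : ℝ≥0) ≠ 0 :=
    inv_ne_zero (Nat.cast_ne_zero.mpr (by omega))
  have hcast : (((n : ℝ≥0)⁻¹ : ℝ≥0) : ℝ) = (n : ℝ)⁻¹ := by push_cast; ring
  have hs1 : 2 * (θ * t) * (((n : ℝ≥0)⁻¹ : ℝ≥0) : ℝ) = s := by
    rw [hcast, hs_def]; ring
  have hGval : G = ENNReal.ofReal ((1 - s) ^ (-(1:ℝ)/2)) := by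
    rw [hG_def, gauss_mgf_sq hv (by rw [hs1]; linarith), hs1]
  set r : ℝ := (1 - s) ^ (-(1:ℝ)/2) with hr_def
  have h1s : (0:ℝ) < 1 - s := by linarith
  have hrpos : 0 < r := Real.rpow_pos_of_pos h1s _
  -- Step 6: combine
  have hm1 : (1:ℝ) ≤ m := by exact_mod_cast hm
  have key : (∑ j : Fin m, ∫⁻ ω, ENNReal.ofReal (Real.exp (θ * t * ∑ i, ω j i ^ 2)) ∂Xlaw n m)
      = ENNReal.ofReal ((m : ℝ) * r ^ n) := by
    rw [Finset.sum_congr rfl (fun j _ => step4 j)]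
    rw [Finset.sum_const, Finset.card_univ, Fintype.card_fin, nsmul_eq_mul, hGval,
      ← ENNReal.ofReal_pow hrpos.le, ← ENNReal.ofReal_natCast,
      ← ENNReal.ofReal_mul (by positivity)]
  -- final real computation
  have hA : (m : ℝ) * r ^ n = Real.exp (Real.log m + n * Real.log r) := by
    rw [Real.exp_add, Real.exp_log (by positivity), ← Real.log_pow,
      Real.exp_log (by positivity)]
  have hlogr : (n : ℝ) * Real.log r ≤ θ * t + 4 * θ ^ 2 * t ^ 2 / n := by
    rw [hr_def, Real.log_rpow h1s]
    have hnl := neg_log_one_sub hst hs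
    have : (n : ℝ) * (-(1:ℝ)/2 * Real.log (1 - s)) = (n / 2) * (-Real.log (1 - s)) := by ring
    rw [this]
    have h2 : (n / 2) * (-Real.log (1 - s)) ≤ (n / 2) * (s + 2 * s ^ 2) := by
      apply mul_le_mul_of_nonneg_left hnl (by positivity)
    have h3 : ((n:ℝ) / 2) * (s + 2 * s ^ 2) = θ * t + 4 * θ ^ 2 * t ^ 2 / n := by
      rw [hs_def]; field_simp; ring
    linarith
  calc ∫⁻ ω, ENNReal.ofReal (Real.exp (t * maxNormSq n m hm ω)) ∂Xlaw n m
      ≤ (∫⁻ ω, (ENNReal.ofReal (Real.exp (t * maxNormSq n m hm ω))) ^ θ ∂Xlaw n m) ^ (1/θ) :=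
        step1
    _ ≤ (ENNReal.ofReal ((m : ℝ) * r ^ n)) ^ (1/θ) := by
        rw [← key]
        exact ENNReal.rpow_le_rpow step3 (by positivity)
    _ = ENNReal.ofReal (((m : ℝ) * r ^ n) ^ ((1:ℝ)/θ)) := by
        rw [ENNReal.ofReal_rpow_of_pos (by positivity)]
    _ ≤ ENNReal.ofReal (Real.exp ((Real.log m + θ*t + 4*θ^2*t^2/n) / θ)) := by
        apply ENNReal.ofReal_le_ofReal
        rw [hA, ← Real.exp_mul]
        apply Real.exp_le_exp.mpr
        rw [div_eq_mul_inv, one_mul]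
        exact mul_le_mul_of_nonneg_right (by linarith [hlogr]) (inv_nonneg.mpr hθ0.le)

set_option maxHeartbeats 2000000 in
lemma analytic {n : ℕ} {t L : ℝ} (ht : 0 ≤ t) (hL : 0 ≤ L) (hn : (4:ℝ) ≤ n)
    (hLn : (L+1)/n ≤ 1/64) (htn : t/n ≤ 1/100) :
    ∃ θ : ℝ, 1 ≤ θ ∧ 2*θ*t/n ≤ 1/2 ∧
      (L + θ*t + 4*θ^2*t^2/n)/θ ≤ 2*t + (Real.sqrt (L/n) + 1/n) := by
  have hnpos : (0:ℝ) < n := by linarith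
  have h2a : (1:ℝ) ≤ Real.sqrt 2 := by
    nlinarith [Real.sq_sqrt (by norm_num : (0:ℝ) ≤ 2), Real.sqrt_nonneg 2]
  have h2b : Real.sqrt 2 ≤ 3/2 := by
    nlinarith [Real.sq_sqrt (by norm_num : (0:ℝ) ≤ 2), Real.sqrt_nonneg 2]
  have ht100 : t ≤ n/100 := by rw [div_le_iff₀ hnpos] at htn; linarith
  have hL1n : L + 1 ≤ n/64 := by rw [div_le_iff₀ hnpos] at hLn; linarith
  set S : ℝ := Real.sqrt (n*(L+1)) with hS_def
  set d : ℝ := Real.sqrt 2 * t + 1 with hd_def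
  have hd1 : 1 ≤ d := by nlinarith [mul_nonneg (Real.sqrt_nonneg 2) ht]
  have hd0 : (0:ℝ) < d := by linarith
  have hS0 : 0 ≤ S := Real.sqrt_nonneg _
  have hS2 : S^2 = n*(L+1) := Real.sq_sqrt (by positivity)
  set Q : ℝ := Real.sqrt (L/n) with hQ_def
  have hQ0 : 0 ≤ Q := Real.sqrt_nonneg _
  have hQ2 : Q^2 = L/n := Real.sq_sqrt (by positivity)
  have hQ8 : Q ≤ 1/8 := by
    have : L/n ≤ 1/64 := le_trans (by gcongr; linarith) hLn
    nlinarith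
  have hSn8 : S ≤ n/8 := by nlinarith
  have htd : t ≤ d := by nlinarith
  clear_value S d Q
  by_cases hE : S ≤ d
  · -- θ = 1
    refine ⟨1, le_refl 1, by rw [show 2*1*t/n = 2*(t/n) by ring]; linarith, ?_⟩
    have hcase : n*(L+1) ≤ 2*t^2 + 3*t + 1 := by
      have hdd : d*d = 2*t^2 + 2*(Real.sqrt 2)*t + 1 := by
        rw [hd_def]
        nlinarith [Real.sq_sqrt (show (0:ℝ) ≤ 2 by norm_num)]
      nlinarith [mul_self_le_mul_self hS0 hE, mul_le_mul_of_nonneg_right h2b ht]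
    have goalm : n*L + 4*t^2 ≤ n*t + 1 := by
      nlinarith [mul_nonneg ht (by linarith : (0:ℝ) ≤ n - 100*t)]
    have hdiv : L + 4*t^2/n ≤ t + 1/n := by
      rw [show L + 4*t^2/n = (n*L + 4*t^2)/n by field_simp,
        show t + 1/n = (n*t+1)/n by field_simp]
      gcongr
    have : (L + 1*t + 4*1^2*t^2/n)/1 = L + t + 4*t^2/n := by ring
    rw [this]
    linarith [hQ0, hdiv]
  · push_neg at hE
    have hSpos : 0 < S := lt_trans hd0 hE
    refine ⟨S/d, le_of_lt ((one_lt_div hd0).mpr hE), ?_, ?_⟩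
    · have h4 : 4*S*t ≤ n*d := by
        nlinarith [mul_nonneg ht (by linarith : (0:ℝ) ≤ n/8 - S), mul_nonneg hnpos.le ht]
      rw [show 2*(S/d)*t/n = 2*S*t/(d*n) by field_simp, div_le_iff₀ (by positivity)]
      linarith
    · have hQS : L ≤ Q*S := by
        have h1 : (Q*S)^2 = L*(L+1) := by
          rw [mul_pow, hQ2, hS2]; field_simp
        calc L = Real.sqrt (L^2) := (Real.sqrt_sq hL).symm
          _ ≤ Real.sqrt ((Q*S)^2) := Real.sqrt_le_sqrt (by nlinarith)
          _ = Q*S := Real.sqrt_sq (mul_nonneg hQ0 hS0)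
      have hsQ : Real.sqrt 2 * Q ≤ 1/4 := by nlinarith [Real.sqrt_nonneg 2]
      have part1 : L*d/S ≤ t/4 + Q := by
        rw [div_le_iff₀ hSpos]
        have e1 : L * (Real.sqrt 2 * t) ≤ Q*S*(Real.sqrt 2 * t) :=
          mul_le_mul_of_nonneg_right hQS (mul_nonneg (Real.sqrt_nonneg 2) ht)
        have e2 : (Real.sqrt 2 * Q) * (t*S) ≤ (1/4)*(t*S) :=
          mul_le_mul_of_nonneg_right hsQ (mul_nonneg ht hS0)
        rw [hd_def]
        nlinarith
      have part2 : 4*(S/d)*t^2/n ≤ t/2 := by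
        rw [show 4*(S/d)*t^2/n = 4*S*t^2/(d*n) by field_simp,
          div_le_iff₀ (by positivity)]
        have h8 : 8*S*t^2 ≤ n*t^2 := by
          nlinarith [mul_nonneg (sq_nonneg t) (by linarith : (0:ℝ) ≤ n/8 - S)]
        have h9 : n*t^2 ≤ n*(t*d) := by
          nlinarith [mul_nonneg hnpos.le (mul_nonneg ht (by linarith : (0:ℝ) ≤ d - t))]
        nlinarith
      have hexp : (L + (S/d)*t + 4*(S/d)^2*t^2/n)/(S/d) = L*d/S + t + 4*(S/d)*t^2/n := by
        field_simp
      rw [hexp]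
      have hninv : (0:ℝ) < 1/n := by positivity
      linarith



set_option maxHeartbeats 1000000 in
/-- **Lemma 12.** There is a constant `c > 0` such that for any sequences `m_n`, `μ_n`
with `μ²/n → 0` and `(log m)/n → 0`,
`E exp((μ⁴/(2n(1+μ²/n))) max_j ‖X_j‖₂²) ≤ exp(c μ⁴/(n(1+μ²/n))) (1 + o(1))`. -/
theorem mgf_max_chi_square_bound :
    ∃ c : ℝ, 0 < c ∧ ∀ (m : ℕ → ℕ) (μ : ℕ → ℝ) (hm0 : ∀ n, 0 < m n),
      Tendsto (fun n => μ n ^ 2 / n) atTop (nhds 0) →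
      Tendsto (fun n => Real.log (m n) / n) atTop (nhds 0) →
      Filter.limsup (fun n =>
          (∫⁻ ω, ENNReal.ofReal
              (Real.exp (μ n ^ 4 / (2 * n * (1 + μ n ^ 2 / n)) *
                maxNormSq n (m n) (hm0 n) ω)) ∂ Xlaw n (m n)).toReal /
            Real.exp (c * μ n ^ 4 / (n * (1 + μ n ^ 2 / n)))) atTop ≤ 1 := by
  refine ⟨1, one_pos, ?_⟩
  intro m μ hm0 hμ hlog
  set L : ℕ → ℝ := fun n => Real.log (m n) with hL_def
  set t : ℕ → ℝ := fun n => μ n ^ 4 / (2 * n * (1 + μ n ^ 2 / n)) with ht_def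
  set ε : ℕ → ℝ := fun n => Real.sqrt (L n / n) + 1 / n with hε_def
  have hL0 : ∀ n, 0 ≤ L n := fun n => Real.log_nonneg (by exact_mod_cast hm0 n)
  have hu0 : ∀ n, 0 ≤ μ n ^ 2 / n := fun n => div_nonneg (sq_nonneg _) (Nat.cast_nonneg n)
  have ht0 : ∀ n, 0 ≤ t n := fun n => div_nonneg (by positivity)
    (by have := hu0 n; positivity)
  have htn : ∀ᶠ n in atTop, t n / (n:ℝ) ≤ 1/100 := by
    have h1 : ∀ᶠ n in atTop, μ n ^ 2 / n ≤ 1/10 :=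
      hμ.eventually (eventually_le_nhds (by norm_num : (0:ℝ) < 1/10))
    filter_upwards [h1, eventually_ge_atTop 1] with n h h1n
    have hnR : (1:ℝ) ≤ n := by exact_mod_cast h1n
    have hnpos : (0:ℝ) < n := by linarith
    have hu := hu0 n
    have ht1 : t n ≤ μ n ^ 4 / (2 * n) := by
      apply div_le_div_of_nonneg_left (by positivity) (by positivity)
      nlinarith
    have heq : μ n ^ 4 / (2*(n:ℝ)) / n = (μ n^2/n)^2/2 := by
      field_simp
    have ht2 : t n / n ≤ (μ n^2/n)^2/2 := by
      calc t n / (n:ℝ) ≤ μ n^4/(2*n)/n := by gcongr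
        _ = (μ n^2/n)^2/2 := heq
    nlinarith [hu]
  have hLn : ∀ᶠ n in atTop, (L n + 1)/(n:ℝ) ≤ 1/64 := by
    have h2 : Tendsto (fun n : ℕ => L n / n + 1/n) atTop (nhds 0) := by
      simpa using hlog.add tendsto_one_div_atTop_nhds_zero_nat
    have h3 := h2.eventually (eventually_le_nhds (by norm_num : (0:ℝ) < 1/64))
    filter_upwards [h3] with n h
    rw [add_div]
    exact h
  have hεto : Tendsto ε atTop (nhds 0) := by
    have h1 : Tendsto (fun n : ℕ => Real.sqrt (L n / n)) atTop (nhds 0) := by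
      have := (Real.continuous_sqrt.tendsto 0).comp hlog
      simpa [Real.sqrt_zero, Function.comp_def] using this
    have := h1.add tendsto_one_div_atTop_nhds_zero_nat
    simpa [hε_def] using this
  have hexp1 : Tendsto (fun n => Real.exp (ε n)) atTop (nhds 1) := by
    have := (Real.continuous_exp.tendsto 0).comp hεto
    simpa [Function.comp_def] using this
  have hev : ∀ᶠ n in atTop,
      (∫⁻ ω, ENNReal.ofReal
        (Real.exp (t n * maxNormSq n (m n) (hm0 n) ω)) ∂ Xlaw n (m n)).toReal /
          Real.exp (1 * μ n ^ 4 / (n * (1 + μ n ^ 2 / n))) ≤ Real.exp (ε n) := by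
    filter_upwards [htn, hLn, eventually_ge_atTop 4] with n h100 h64 hn4
    have hn1 : 1 ≤ n := by omega
    have hnR4 : (4:ℝ) ≤ n := by exact_mod_cast hn4
    have hnpos : (0:ℝ) < n := by linarith
    obtain ⟨θ, hθ1, hθs, hθmain⟩ := analytic (ht0 n) (hL0 n) hnR4 h64 h100
    have hb := main_bound n (m n) (hm0 n) hn1 (t n) θ (ht0 n) hθ1 hθs
    have hb2 : (∫⁻ ω, ENNReal.ofReal
        (Real.exp (t n * maxNormSq n (m n) (hm0 n) ω)) ∂ Xlaw n (m n))
        ≤ ENNReal.ofReal (Real.exp (2 * t n + ε n)) :=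
      le_trans hb (ENNReal.ofReal_le_ofReal (Real.exp_le_exp.mpr (by
        have := hθmain; simp only [hε_def]; linarith)))
    have hto := ENNReal.toReal_le_of_le_ofReal (Real.exp_nonneg _) hb2
    have hu := hu0 n
    have h1u : (0:ℝ) < 1 + μ n ^ 2 / n := by linarith
    have hden : 1 * μ n ^ 4 / ((n:ℝ) * (1 + μ n ^ 2 / n)) = 2 * t n := by
      simp only [ht_def]
      field_simp
    rw [hden]
    calc (∫⁻ ω, ENNReal.ofReal
          (Real.exp (t n * maxNormSq n (m n) (hm0 n) ω)) ∂ Xlaw n (m n)).toReal /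
            Real.exp (2 * t n)
        ≤ Real.exp (2 * t n + ε n) / Real.exp (2 * t n) := by
          gcongr
      _ = Real.exp (ε n) := by rw [← Real.exp_sub]; ring_nf
  refine le_trans (Filter.limsup_le_limsup hev ?_ ?_) (le_of_eq hexp1.limsup_eq)
  · refine Filter.IsBoundedUnder.isCoboundedUnder_le (isBoundedUnder_of ⟨0, fun n => ?_⟩)
    exact div_nonneg ENNReal.toReal_nonneg (Real.exp_nonneg _)
  · exact hexp1.isBoundedUnder_le
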